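/- For all positive integers m ≤ n, ∑_{k=m}^{n} (-1)^{n-k} · C(k-1,m-1) · w(n,k) = w(n,m). -/

import Mathlib

open fwdDiff

/-- `w(n,k) = C(n-1,k-1)·C(n+k,k) − C(n,k)·C(n+k,k-1)`. -/
def w (n k : ℕ) : ℤ :=
  ((n - 1).choose (k - 1) * (n + k).choose k : ℤ) - (n.choose k * (n + k).choose (k - 1) : ℤ)

/-- Key finite-difference identity:
`∑_{j=0}^{N} (-1)^{N-j} C(N,j) C(a+j,r) = C(a, r-N)` for `N ≤ r`. -/
lemma key_sum (a r N : ℕ) (h : N ≤ r) :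
    ∑ j ∈ Finset.range (N + 1),
      (-1 : ℤ) ^ (N - j) * (N.choose j : ℤ) * ((a + j).choose r : ℤ)
      = (a.choose (r - N) : ℤ) := by
  have h1 : (fwdDiff (1:ℕ))^[N] (fun x : ℕ ↦ (x.choose r : ℤ)) a = (a.choose (r - N) : ℤ) := by
    conv_lhs => rw [show r = N + (r - N) by omega]
    rw [fwdDiff_iter_choose]
  rw [fwdDiff_iter_eq_sum_shift] at h1
  rw [← h1]
  apply Finset.sum_congr rfl
  intro j _
  simp [smul_eq_mul, mul_assoc]

/-- `(n+1)·w(n,k) = C(n-1,k-1)·C(n+k,k)` for `1 ≤ k ≤ n`. -/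
lemma w_mul (n k : ℕ) (hk : 1 ≤ k) (hkn : k ≤ n) :
    (n + 1 : ℤ) * w n k = ((n - 1).choose (k - 1) : ℤ) * ((n + k).choose k : ℤ) := by
  have h1 : ((n + k).choose k * k : ℤ) = ((n + k).choose (k - 1) : ℤ) * (n + 1) := by
    have := Nat.choose_succ_right_eq (n + k) (k - 1)
    rw [Nat.sub_add_cancel hk, show n + k - (k - 1) = n + 1 by omega] at this
    exact_mod_cast this
  have h2 : (n : ℤ) * ((n - 1).choose (k - 1) : ℤ) = (n.choose k : ℤ) * k := by
    have := Nat.add_one_mul_choose_eq (n - 1) (k - 1)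
    rw [Nat.sub_add_cancel hk,
      Nat.sub_add_cancel (le_trans hk hkn)] at this
    exact_mod_cast this
  simp only [w]
  linear_combination (n.choose k : ℤ) * h1 + ((n + k).choose k : ℤ) * h2

/-- For positive integers `m ≤ n`,
`∑_{k=m}^{n} (-1)^{n-k} C(k-1,m-1) w(n,k) = w(n,m)`. -/
theorem sum_alternating_w (m n : ℕ) (hm : 1 ≤ m) (hmn : m ≤ n) :
    ∑ k ∈ Finset.Icc m n, (-1 : ℤ) ^ (n - k) * ((k - 1).choose (m - 1) : ℤ) * w n k
      = w n m := by
  have hn1 : (n + 1 : ℤ) ≠ 0 := by positivity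
  apply mul_left_cancel₀ hn1
  rw [Finset.mul_sum, w_mul n m hm hmn]
  have step : ∀ k ∈ Finset.Icc m n,
      (n + 1 : ℤ) * ((-1 : ℤ) ^ (n - k) * ((k - 1).choose (m - 1) : ℤ) * w n k)
      = ((n - 1).choose (m - 1) : ℤ) *
          ((-1 : ℤ) ^ (n - k) * ((n - m).choose (k - m) : ℤ) * ((n + k).choose n : ℤ)) := by
    intro k hk
    rw [Finset.mem_Icc] at hk
    have hk1 : 1 ≤ k := le_trans hm hk.1
    have e1 : (n + 1 : ℤ) * ((-1 : ℤ) ^ (n - k) * ((k - 1).choose (m - 1) : ℤ) * w n k)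
        = (-1 : ℤ) ^ (n - k) * (((k - 1).choose (m - 1) : ℤ) *
            (((n - 1).choose (k - 1) : ℤ) * ((n + k).choose k : ℤ))) := by
      rw [show (n + 1 : ℤ) * ((-1 : ℤ) ^ (n - k) * ((k - 1).choose (m - 1) : ℤ) * w n k)
          = (-1 : ℤ) ^ (n - k) * (((k - 1).choose (m - 1) : ℤ) * ((n + 1 : ℤ) * w n k)) by ring,
        w_mul n k hk1 hk.2]
    rw [e1]
    have tri : (k - 1).choose (m - 1) * (n - 1).choose (k - 1)
        = (n - 1).choose (m - 1) * (n - m).choose (k - m) := by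
      have := Nat.choose_mul (n := n - 1) (k := k - 1) (s := m - 1)
        (by omega)
      rw [show n - 1 - (m - 1) = n - m by omega, show k - 1 - (m - 1) = k - m by omega] at this
      rw [Nat.mul_comm]; exact this
    have sym : (n + k).choose k = (n + k).choose n := by
      rw [← Nat.choose_symm (by omega : k ≤ n + k), show n + k - k = n by omega]
    rw [sym]
    have htri : ((k - 1).choose (m - 1) : ℤ) * ((n - 1).choose (k - 1) : ℤ)
        = ((n - 1).choose (m - 1) : ℤ) * ((n - m).choose (k - m) : ℤ) := by
      exact_mod_cast congrArg (Nat.cast (R := ℤ)) tri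
    linear_combination ((-1 : ℤ) ^ (n - k) * ((n + k).choose n : ℤ)) * htri
  rw [Finset.sum_congr rfl step, ← Finset.mul_sum]
  have reindex : ∑ k ∈ Finset.Icc m n,
      (-1 : ℤ) ^ (n - k) * ((n - m).choose (k - m) : ℤ) * ((n + k).choose n : ℤ)
      = ∑ j ∈ Finset.range (n - m + 1),
          (-1 : ℤ) ^ ((n - m) - j) * ((n - m).choose j : ℤ) * (((n + m) + j).choose n : ℤ) := by
    rw [show Finset.Icc m n = Finset.Ico m (n + 1) by rw [Finset.Ico_add_one_right_eq_Icc],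
      Finset.sum_Ico_eq_sum_range]
    apply Finset.sum_congr (by congr 1; omega)
    intro j hj
    rw [Finset.mem_range] at hj
    rw [show n - (m + j) = n - m - j by omega, show m + j - m = j by omega,
      show n + (m + j) = n + m + j by omega]
  rw [reindex, key_sum (n + m) n (n - m) (by omega), show n - (n - m) = m by omega,
    show (n + m).choose m = (n + m).choose n by
      rw [← Nat.choose_symm (by omega : n ≤ n + m), show n + m - n = m by omega]]
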